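/- arXiv:2103.10152 — 2 statements merged into one kernel-verified Lean document; each statement's English description precedes it below -/
import Mathlib

section
/- Assume (Poly-R₁). Then for every a>0 there exists a constant c₁=c₁(a)>0 such that |φ″(λ)| ≤ c₁λ^{−1}φ′(λ) for all λ>a. Moreover, if (Poly-∞) holds, then |φ″(λ)| ≤ c₁λ^{−1}φ′(λ) holds for all λ>0. -/
open MeasureTheory Real Set
open scoped ENNReal

/-- Tail of the Lévy measure: `w(r) = ν((r,∞))`. -/
noncomputable def levyTail (ν : Measure ℝ) (r : ℝ) : ℝ := (ν (Set.Ioi r)).toReal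

/-- Laplace exponent `φ(λ) = ∫ (1 - e^{-λ s}) ν(ds)`. -/
noncomputable def laplaceExp (ν : Measure ℝ) (lam : ℝ) : ℝ :=
  ∫ s, (1 - Real.exp (-(lam * s))) ∂ν

/-- Condition (Poly-R₁); (Poly-∞) is the case `R₁ = ⊤`. -/
def PolyCond (ν : Measure ℝ) (R₁ : ℝ≥0∞) (c c' β₁ β₂ : ℝ) : Prop :=
  ∀ r R : ℝ, 0 < r → r ≤ R → ENNReal.ofReal R < R₁ →
    c * (R / r) ^ β₁ ≤ levyTail ν r / levyTail ν R ∧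
      levyTail ν r / levyTail ν R ≤ c' * (R / r) ^ β₂

/-- `ν` is the Lévy measure of a driftless subordinator. -/
structure IsLevyMeasure (ν : Measure ℝ) : Prop where
  supp : ν (Set.Iic 0) = 0
  tail_fin : ∀ r : ℝ, 0 < r → ν (Set.Ioi r) < ⊤
  integ : IntegrableOn (fun s => s) (Set.Ioc (0:ℝ) 1) ν

/-- `μ t` is the law of `S_t` for the driftless subordinator with Lévy measure `ν`. -/
structure IsSubordinatorLaw (ν : Measure ℝ) (μ : ℝ → Measure ℝ) : Prop where
  levy : IsLevyMeasure ν
  prob : ∀ t : ℝ, 0 < t → IsProbabilityMeasure (μ t)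
  nonneg : ∀ t : ℝ, 0 < t → μ t (Set.Iio 0) = 0
  laplace : ∀ t lam : ℝ, 0 < t → 0 ≤ lam →
    (∫ s, Real.exp (-(lam * s)) ∂(μ t)) = Real.exp (-(t * laplaceExp ν lam))

/-- `H(λ) = φ(λ) - λ φ'(λ)`. -/
noncomputable def Hfun (ν : Measure ℝ) (lam : ℝ) : ℝ :=
  laplaceExp ν lam - lam * deriv (laplaceExp ν) lam

/-- `σ(t,s) = (φ')⁻¹(s/t)` if `s/t < φ'(0+)`, and `σ(t,s) = 0` otherwise. -/
def IsSigmaFun (ν : Measure ℝ) (σ : ℝ → ℝ → ℝ) : Prop :=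
  ∀ t s : ℝ, 0 < t → 0 < s →
    ((∃ lam : ℝ, 0 < lam ∧ s / t < deriv (laplaceExp ν) lam) →
      0 < σ t s ∧ deriv (laplaceExp ν) (σ t s) = s / t) ∧
    ((∀ lam : ℝ, 0 < lam → deriv (laplaceExp ν) lam ≤ s / t) → σ t s = 0)

/-- `φInv` is the inverse of the Laplace exponent `φ` on `(0,∞)`. -/
def IsPhiInv (ν : Measure ℝ) (φInv : ℝ → ℝ) : Prop :=
  ∀ u : ℝ, 0 < u → 0 < φInv u ∧ laplaceExp ν (φInv u) = u

/-- `HInv` is the inverse of `H` on `(0,∞)`. -/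
def IsHInv (ν : Measure ℝ) (HInv : ℝ → ℝ) : Prop :=
  ∀ u : ℝ, 0 < u → 0 < HInv u ∧ Hfun ν (HInv u) = u

open Filter Metric
section Aux
variable {ν : Measure ℝ}

lemma ae_pos (hν : IsLevyMeasure ν) : ∀ᵐ s ∂ν, (0:ℝ) < s := by
  rw [ae_iff]
  have : {s : ℝ | ¬ (0:ℝ) < s} = Set.Iic 0 := by ext x; simp [not_lt]
  rw [this]; exact hν.supp

/-- a generic integrability lemma -/
lemma integrable_aux (hν : IsLevyMeasure ν) (f : ℝ → ℝ) (hf : Continuous f)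
    (C₁ C₂ : ℝ) (h1 : ∀ s ∈ Set.Ioc (0:ℝ) 1, ‖f s‖ ≤ C₁ * s)
    (h2 : ∀ s ∈ Set.Ioi (1:ℝ), ‖f s‖ ≤ C₂) : Integrable f ν := by
  have hmeas : AEStronglyMeasurable f ν := hf.aestronglyMeasurable
  rw [← integrableOn_univ]
  have hu : (Set.Iic (0:ℝ)) ∪ (Set.Ioc 0 1 ∪ Set.Ioi 1) = Set.univ := by
    rw [Set.Ioc_union_Ioi_eq_Ioi (by norm_num : (0:ℝ) ≤ 1), Set.Iic_union_Ioi]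
  rw [← hu]
  refine IntegrableOn.union ?_ (IntegrableOn.union ?_ ?_)
  · rw [IntegrableOn, Measure.restrict_eq_zero.mpr hν.supp]
    exact integrable_zero_measure
  · refine Integrable.mono (hν.integ.const_mul C₁) hf.aestronglyMeasurable.restrict ?_
    refine (ae_restrict_iff' measurableSet_Ioc).mpr (ae_of_all _ fun s hs => ?_)
    exact (h1 s hs).trans (le_abs_self _)
  · refine Measure.integrableOn_of_bounded (M := C₂) (hν.tail_fin 1 one_pos).ne
      hf.aestronglyMeasurable ?_
    exact (ae_restrict_iff' measurableSet_Ioi).mpr (ae_of_all _ h2)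

lemma exp_bound1 (hν : IsLevyMeasure ν) (lam : ℝ) (hlam : 0 < lam) :
    Integrable (fun s => s * Real.exp (-(lam * s))) ν := by
  refine integrable_aux hν _ (by continuity) 1 lam⁻¹ ?_ ?_
  · intro s hs
    rw [Real.norm_eq_abs, abs_of_nonneg (mul_nonneg hs.1.le (Real.exp_pos _).le), one_mul]
    nlinarith [Real.exp_le_one_iff.mpr (by nlinarith [hs.1] : -(lam*s) ≤ 0), hs.1.le,
      Real.exp_pos (-(lam*s))]
  · intro s hs
    simp only [Set.mem_Ioi] at hs
    rw [Real.norm_eq_abs, abs_of_nonneg (by positivity)]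
    have hx : lam * s ≤ Real.exp (lam * s) := by
      nlinarith [Real.add_one_le_exp (lam * s)]
    have h := Real.exp_pos (lam * s)
    rw [Real.exp_neg, mul_comm, inv_mul_le_iff₀ h, ← div_eq_mul_inv, le_div_iff₀ hlam]
    nlinarith

end Aux

lemma sq_exp_le {lam : ℝ} (hlam : 0 < lam) {s : ℝ} (hs : 0 ≤ s) :
    s^2 * Real.exp (-(lam*s)) ≤ 4 / lam^2 := by
  have h1 : lam*s ≤ 2*Real.exp (lam*s/2) := by
    nlinarith [Real.add_one_le_exp (lam*s/2), mul_nonneg hlam.le hs]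
  have hE : Real.exp (lam*s) = (Real.exp (lam*s/2))^2 := by
    rw [sq, ← Real.exp_add]; ring_nf
  have h2 : (lam*s)^2 ≤ 4 * Real.exp (lam*s) := by
    rw [hE]; nlinarith [Real.exp_pos (lam*s/2), mul_nonneg hlam.le hs]
  have hEpos : (0:ℝ) < Real.exp (lam*s) := Real.exp_pos _
  rw [le_div_iff₀ (by positivity), Real.exp_neg]
  nlinarith [h2, mul_inv_cancel₀ hEpos.ne', inv_pos.mpr hEpos, sq_nonneg s, sq_nonneg lam,
    mul_nonneg (mul_nonneg (sq_nonneg s) (inv_pos.mpr hEpos).le) (sq_nonneg lam)]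

lemma exp_bound2 {ν : Measure ℝ} (hν : IsLevyMeasure ν) (lam : ℝ) (hlam : 0 < lam) :
    Integrable (fun s => s^2 * Real.exp (-(lam * s))) ν := by
  refine integrable_aux hν _ (by continuity) 1 (4/lam^2) ?_ ?_
  · intro s hs
    rw [Real.norm_eq_abs, abs_of_nonneg (mul_nonneg (sq_nonneg s) (Real.exp_pos _).le), one_mul]
    have he : Real.exp (-(lam*s)) ≤ 1 := Real.exp_le_one_iff.mpr (by nlinarith [hs.1])
    nlinarith [hs.1, hs.2, Real.exp_pos (-(lam*s))]
  · intro s hs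
    simp only [Set.mem_Ioi] at hs
    rw [Real.norm_eq_abs, abs_of_nonneg (mul_nonneg (sq_nonneg s) (Real.exp_pos _).le)]
    exact sq_exp_le hlam (by linarith)

lemma exp_bound0 {ν : Measure ℝ} (hν : IsLevyMeasure ν) (lam : ℝ) (hlam : 0 < lam) :
    Integrable (fun s => 1 - Real.exp (-(lam * s))) ν := by
  refine integrable_aux hν _ (by continuity) lam 1 ?_ ?_
  · intro s hs
    have he : Real.exp (-(lam*s)) ≤ 1 := Real.exp_le_one_iff.mpr (by nlinarith [hs.1])
    rw [Real.norm_eq_abs, abs_of_nonneg (by linarith)]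
    nlinarith [Real.add_one_le_exp (-(lam*s))]
  · intro s hs
    simp only [Set.mem_Ioi] at hs
    have he : Real.exp (-(lam*s)) ≤ 1 := Real.exp_le_one_iff.mpr (by nlinarith)
    rw [Real.norm_eq_abs, abs_of_nonneg (by linarith)]
    nlinarith [Real.exp_pos (-(lam*s))]

lemma hasDeriv_laplace {ν : Measure ℝ} (hν : IsLevyMeasure ν) {lam : ℝ} (hlam : 0 < lam) :
    HasDerivAt (laplaceExp ν) (∫ s, s * Real.exp (-(lam * s)) ∂ν) lam := by
  have hε : 0 < lam / 2 := by positivity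
  have h := hasDerivAt_integral_of_dominated_loc_of_deriv_le
      (F := fun (x : ℝ) (s : ℝ) => 1 - Real.exp (-(x * s)))
      (F' := fun (x : ℝ) (s : ℝ) => s * Real.exp (-(x * s)))
      (x₀ := lam) (μ := ν) (bound := fun s => s * Real.exp (-(lam/2 * s))) (Metric.ball_mem_nhds lam hε)
      (Eventually.of_forall fun x => (Continuous.aestronglyMeasurable (by continuity)))
      (exp_bound0 hν lam hlam)
      (Continuous.aestronglyMeasurable (by continuity))
      ?_ (exp_bound1 hν (lam/2) hε) ?_
  · exact h.2
  · filter_upwards [ae_pos hν] with s hs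
    intro x hx
    rw [mem_ball, Real.dist_eq, abs_lt] at hx
    have hx2 : lam/2 ≤ x := by linarith [hx.1]
    rw [Real.norm_eq_abs, abs_of_nonneg (mul_nonneg hs.le (Real.exp_pos _).le)]
    have : Real.exp (-(x*s)) ≤ Real.exp (-(lam/2*s)) :=
      Real.exp_le_exp.mpr (by nlinarith)
    nlinarith [Real.exp_pos (-(x*s))]
  · refine Eventually.of_forall fun s => fun x _ => ?_
    have h1 : HasDerivAt (fun x : ℝ => x * s) s x := hasDerivAt_mul_const s
    have h2 := (h1.neg.exp).const_sub 1
    convert h2 using 1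
    · ext y; simp only [Pi.neg_apply]
    · simp only [Pi.neg_apply]; ring

lemma deriv_laplace {ν : Measure ℝ} (hν : IsLevyMeasure ν) {lam : ℝ} (hlam : 0 < lam) :
    deriv (laplaceExp ν) lam = ∫ s, s * Real.exp (-(lam * s)) ∂ν :=
  (hasDeriv_laplace hν hlam).deriv

lemma hasDeriv2_laplace {ν : Measure ℝ} (hν : IsLevyMeasure ν) {lam : ℝ} (hlam : 0 < lam) :
    HasDerivAt (fun x => ∫ s, s * Real.exp (-(x * s)) ∂ν)
      (-∫ s, s^2 * Real.exp (-(lam * s)) ∂ν) lam := by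
  have hε : 0 < lam / 2 := by positivity
  have h := hasDerivAt_integral_of_dominated_loc_of_deriv_le
      (F := fun (x : ℝ) (s : ℝ) => s * Real.exp (-(x * s)))
      (F' := fun (x : ℝ) (s : ℝ) => -(s^2 * Real.exp (-(x * s))))
      (x₀ := lam) (μ := ν) (bound := fun s => s^2 * Real.exp (-(lam/2 * s))) (Metric.ball_mem_nhds lam hε)
      (Eventually.of_forall fun x => (Continuous.aestronglyMeasurable (by continuity)))
      (exp_bound1 hν lam hlam)
      (Continuous.aestronglyMeasurable (by continuity))
      ?_ (exp_bound2 hν (lam/2) hε) ?_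
  · have := h.2
    rwa [integral_neg] at this
  · filter_upwards [ae_pos hν] with s hs
    intro x hx
    rw [mem_ball, Real.dist_eq, abs_lt] at hx
    have hx2 : lam/2 ≤ x := by linarith [hx.1]
    rw [Real.norm_eq_abs, abs_neg, abs_of_nonneg (mul_nonneg (sq_nonneg s) (Real.exp_pos _).le)]
    have : Real.exp (-(x*s)) ≤ Real.exp (-(lam/2*s)) :=
      Real.exp_le_exp.mpr (by nlinarith)
    nlinarith [Real.exp_pos (-(x*s)), sq_nonneg s]
  · refine Eventually.of_forall fun s => fun x _ => ?_
    have h1 : HasDerivAt (fun x : ℝ => x * s) s x := hasDerivAt_mul_const s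
    have h2 := (h1.neg.exp).const_mul s
    convert h2 using 1
    · rfl
    · rfl
    · simp only [Pi.neg_apply]; ring

lemma deriv2_laplace {ν : Measure ℝ} (hν : IsLevyMeasure ν) {lam : ℝ} (hlam : 0 < lam) :
    deriv (deriv (laplaceExp ν)) lam = -∫ s, s^2 * Real.exp (-(lam * s)) ∂ν := by
  have hev : deriv (laplaceExp ν) =ᶠ[nhds lam] fun x => ∫ s, s * Real.exp (-(x * s)) ∂ν := by
    filter_upwards [Ioi_mem_nhds hlam] with x hx using deriv_laplace hν hx
  rw [hev.deriv_eq]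
  exact (hasDeriv2_laplace hν hlam).deriv

set_option maxHeartbeats 1000000 in
lemma key_estimate {ν : Measure ℝ} (hν : IsLevyMeasure ν)
    {R₁ : ℝ≥0∞} {c c' β₁ β₂ : ℝ} (hc : 0 < c)
    (hpoly : PolyCond ν R₁ c c' β₁ β₂)
    {κ : ℝ} (hκ : 1 < κ) (hκc : 2 ≤ c * κ ^ β₁)
    {lam T δ : ℝ} (hlam : 0 < lam) (hT : 0 < T) (hδ : 0 < δ)
    (h1 : lam * T ≤ 1) (h2 : δ ≤ lam * T) (hTR : ENNReal.ofReal T < R₁) :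
    ∫ s, s^2 * Real.exp (-(lam * s)) ∂ν ≤
      (1 + 4 * κ * Real.exp 1 / δ) * lam⁻¹ * ∫ s, s * Real.exp (-(lam * s)) ∂ν := by
  have hκ0 : (0:ℝ) < κ := lt_trans one_pos hκ
  have int1 := exp_bound1 hν lam hlam
  have int2 := exp_bound2 hν lam hlam
  have hae1 : 0 ≤ᵐ[ν] fun s => s * Real.exp (-(lam * s)) := by
    filter_upwards [ae_pos hν] with s hs
    exact mul_nonneg hs.le (Real.exp_pos _).le
  have hI1nonneg : 0 ≤ ∫ s, s * Real.exp (-(lam * s)) ∂ν := integral_nonneg_of_ae hae1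
  -- positivity of the tail at T
  have hwT_pos : 0 < levyTail ν T := by
    by_contra h
    push_neg at h
    have h0 : levyTail ν T = 0 := le_antisymm h ENNReal.toReal_nonneg
    have := (hpoly T T hT le_rfl hTR).1
    rw [h0, div_zero, div_self hT.ne', Real.one_rpow, mul_one] at this
    linarith
  -- lower bound on tail at T/κ
  have hTκpos : 0 < T / κ := by positivity
  have hTκ : T / κ ≤ T := div_le_self hT.le hκ.le
  have hlow : 2 * levyTail ν T ≤ levyTail ν (T / κ) := by
    have hpoly2 := (hpoly (T/κ) T hTκpos hTκ hTR).1
    have hTT : T / (T/κ) = κ := by field_simp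
    rw [hTT] at hpoly2
    have h2' : (2:ℝ) ≤ levyTail ν (T/κ) / levyTail ν T := le_trans hκc hpoly2
    exact (le_div_iff₀ hwT_pos).mp h2'
  -- measure of the annulus
  have hIocfin : ν (Set.Ioc (T/κ) T) ≠ ⊤ :=
    (lt_of_le_of_lt (measure_mono Set.Ioc_subset_Ioi_self) (hν.tail_fin _ hTκpos)).ne
  have hIoc : (ν (Set.Ioc (T/κ) T)).toReal = levyTail ν (T/κ) - levyTail ν T := by
    rw [← Set.Ioi_diff_Ioi,
      measure_diff (Set.Ioi_subset_Ioi hTκ) measurableSet_Ioi.nullMeasurableSet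
        (hν.tail_fin T hT).ne,
      ENNReal.toReal_sub_of_le (measure_mono (Set.Ioi_subset_Ioi hTκ)) (hν.tail_fin _ hTκpos).ne]
    rfl
  -- lower bound for the first-derivative integral
  have hI1low : T / κ * Real.exp (-1) * levyTail ν T ≤ ∫ s, s * Real.exp (-(lam * s)) ∂ν := by
    have hstep : T / κ * Real.exp (-1) * (ν (Set.Ioc (T/κ) T)).toReal ≤
        ∫ s in Set.Ioc (T/κ) T, s * Real.exp (-(lam * s)) ∂ν := by
      refine setIntegral_ge_of_const_le_real measurableSet_Ioc hIocfin ?_ int1.integrableOn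
      intro x hx
      have hx1 : T / κ ≤ x := hx.1.le
      have hexp : Real.exp (-1) ≤ Real.exp (-(lam * x)) := by
        refine Real.exp_le_exp.mpr ?_
        have : lam * x ≤ lam * T := by nlinarith [hx.2]
        linarith
      exact mul_le_mul hx1 hexp (Real.exp_pos _).le (le_trans hTκpos.le hx1)
    have hsub : ∫ s in Set.Ioc (T/κ) T, s * Real.exp (-(lam * s)) ∂ν ≤
        ∫ s, s * Real.exp (-(lam * s)) ∂ν := setIntegral_le_integral int1 hae1
    have hmw : levyTail ν T ≤ (ν (Set.Ioc (T/κ) T)).toReal := by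
      rw [hIoc]; linarith
    nlinarith [Real.exp_pos (-1 : ℝ)]
  -- split the second-moment integral
  have hres : ν.restrict (Set.Ioi 0) = ν :=
    Measure.restrict_eq_self_of_ae_mem (ae_pos hν)
  have hsplit : ∫ s, s^2 * Real.exp (-(lam * s)) ∂ν =
      (∫ s in Set.Ioc 0 T, s^2 * Real.exp (-(lam * s)) ∂ν) +
        ∫ s in Set.Ioi T, s^2 * Real.exp (-(lam * s)) ∂ν := by
    conv_lhs => rw [← hres]
    rw [show Set.Ioi (0:ℝ) = Set.Ioc 0 T ∪ Set.Ioi T from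
        (Set.Ioc_union_Ioi_eq_Ioi hT.le).symm,
      setIntegral_union (Set.Ioc_disjoint_Ioi le_rfl) measurableSet_Ioi
        int2.integrableOn int2.integrableOn]
  -- piece 1
  have hp1 : ∫ s in Set.Ioc 0 T, s^2 * Real.exp (-(lam * s)) ∂ν ≤
      T * ∫ s, s * Real.exp (-(lam * s)) ∂ν := by
    have hmono : ∫ s in Set.Ioc 0 T, s^2 * Real.exp (-(lam * s)) ∂ν ≤
        ∫ s in Set.Ioc 0 T, T * (s * Real.exp (-(lam * s))) ∂ν := by
      refine setIntegral_mono_on int2.integrableOn (int1.const_mul T).integrableOn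
        measurableSet_Ioc fun x hx => ?_
      nlinarith [Real.exp_pos (-(lam * x)), hx.1, hx.2,
        mul_nonneg (mul_nonneg (sub_nonneg.mpr hx.2) hx.1.le) (Real.exp_pos (-(lam*x))).le]
    rw [integral_const_mul] at hmono
    refine hmono.trans (mul_le_mul_of_nonneg_left (setIntegral_le_integral int1 hae1) hT.le)
  -- piece 2
  have hp2 : ∫ s in Set.Ioi T, s^2 * Real.exp (-(lam * s)) ∂ν ≤ 4 / lam^2 * levyTail ν T := by
    have hb := norm_setIntegral_le_of_norm_le_const (μ := ν) (s := Set.Ioi T)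
      (f := fun s => s^2 * Real.exp (-(lam * s))) (C := 4 / lam^2) (hν.tail_fin T hT) ?_
    · calc ∫ s in Set.Ioi T, s^2 * Real.exp (-(lam * s)) ∂ν
          ≤ ‖∫ s in Set.Ioi T, s^2 * Real.exp (-(lam * s)) ∂ν‖ := le_abs_self _
        _ ≤ 4 / lam^2 * (ν (Set.Ioi T)).toReal := hb
        _ = 4 / lam^2 * levyTail ν T := rfl
    · intro x hx
      simp only [Set.mem_Ioi] at hx
      rw [Real.norm_eq_abs, abs_of_nonneg (mul_nonneg (sq_nonneg x) (Real.exp_pos _).le)]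
      exact sq_exp_le hlam (le_trans hT.le hx.le)
  -- combine
  have hTlam : T ≤ lam⁻¹ := by
    rw [← one_div, le_div_iff₀ hlam]
    linarith [h1]
  have hTw : T * levyTail ν T ≤ κ * Real.exp 1 * ∫ s, s * Real.exp (-(lam * s)) ∂ν := by
    have he : Real.exp (-1 : ℝ) = (Real.exp 1)⁻¹ := Real.exp_neg 1
    have h := mul_le_mul_of_nonneg_left hI1low (by positivity : (0:ℝ) ≤ κ * Real.exp 1)
    calc T * levyTail ν T
        = κ * Real.exp 1 * (T / κ * Real.exp (-1) * levyTail ν T) := by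
          rw [he]; field_simp
      _ ≤ κ * Real.exp 1 * ∫ s, s * Real.exp (-(lam * s)) ∂ν := h
  have hinv : lam⁻¹ ≤ T / δ := by
    rw [← one_div, div_le_div_iff₀ hlam hδ]
    nlinarith
  have h4 : 4 / lam^2 * levyTail ν T ≤
      (4 * κ * Real.exp 1 / δ) * lam⁻¹ * ∫ s, s * Real.exp (-(lam * s)) ∂ν := by
    have e1 : 4 / lam^2 * levyTail ν T = 4 * lam⁻¹ * (lam⁻¹ * levyTail ν T) := by
      rw [div_eq_mul_inv, pow_two, mul_inv]; ring
    have e2 : lam⁻¹ * levyTail ν T ≤ (T / δ) * levyTail ν T :=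
      mul_le_mul_of_nonneg_right hinv ENNReal.toReal_nonneg
    have e3 : (T / δ) * levyTail ν T ≤ (1/δ) * (κ * Real.exp 1 * ∫ s, s * Real.exp (-(lam * s)) ∂ν) := by
      have : (T / δ) * levyTail ν T = (1/δ) * (T * levyTail ν T) := by ring
      rw [this]
      exact mul_le_mul_of_nonneg_left hTw (by positivity)
    calc 4 / lam^2 * levyTail ν T = 4 * lam⁻¹ * (lam⁻¹ * levyTail ν T) := e1
      _ ≤ 4 * lam⁻¹ * ((T / δ) * levyTail ν T) := by
          refine mul_le_mul_of_nonneg_left e2 (by positivity)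
      _ ≤ 4 * lam⁻¹ * ((1/δ) * (κ * Real.exp 1 * ∫ s, s * Real.exp (-(lam * s)) ∂ν)) := by
          refine mul_le_mul_of_nonneg_left e3 (by positivity)
      _ = (4 * κ * Real.exp 1 / δ) * lam⁻¹ * ∫ s, s * Real.exp (-(lam * s)) ∂ν := by ring
  have hTI : T * (∫ s, s * Real.exp (-(lam * s)) ∂ν) ≤
      lam⁻¹ * ∫ s, s * Real.exp (-(lam * s)) ∂ν :=
    mul_le_mul_of_nonneg_right hTlam hI1nonneg
  rw [hsplit]
  have : (1 + 4 * κ * Real.exp 1 / δ) * lam⁻¹ * (∫ s, s * Real.exp (-(lam * s)) ∂ν) =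
      lam⁻¹ * (∫ s, s * Real.exp (-(lam * s)) ∂ν) +
        (4 * κ * Real.exp 1 / δ) * lam⁻¹ * ∫ s, s * Real.exp (-(lam * s)) ∂ν := by ring
  rw [this]
  linarith [hp1, hp2, h4, hTI]

lemma exists_kappa {c β₁ : ℝ} (hc : 0 < c) (hβ₁ : 0 < β₁) :
    ∃ κ : ℝ, 1 < κ ∧ 2 ≤ c * κ ^ β₁ := by
  refine ⟨max 2 ((2/c) ^ β₁⁻¹), lt_of_lt_of_le one_lt_two (le_max_left _ _), ?_⟩
  have h0 : (0:ℝ) ≤ 2 / c := by positivity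
  have h1 : (2/c : ℝ) ^ β₁⁻¹ ≤ max 2 ((2/c) ^ β₁⁻¹) := le_max_right _ _
  have h2 : ((2/c : ℝ) ^ β₁⁻¹) ^ β₁ ≤ (max 2 ((2/c) ^ β₁⁻¹)) ^ β₁ :=
    Real.rpow_le_rpow (Real.rpow_nonneg h0 _) h1 hβ₁.le
  have h3 : ((2/c : ℝ) ^ β₁⁻¹) ^ β₁ = 2 / c := by
    rw [← Real.rpow_mul h0, inv_mul_cancel₀ hβ₁.ne', Real.rpow_one]
  have hcc : c * (2/c) = 2 := by field_simp
  rw [h3] at h2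
  calc (2:ℝ) = c * (2/c) := hcc.symm
    _ ≤ c * (max 2 ((2/c) ^ β₁⁻¹)) ^ β₁ := mul_le_mul_of_nonneg_left h2 hc.le


/-- Lemma 2.2: under (Poly-R₁), for every `a > 0` there is `c₁ > 0` with
`|φ''(λ)| ≤ c₁ λ⁻¹ φ'(λ)` for `λ > a`; under (Poly-∞) this holds for all `λ > 0`. -/
theorem phi_second_deriv_bound
    (ν : Measure ℝ) (hν : IsLevyMeasure ν)
    (R₁ : ℝ≥0∞) (c c' β₁ β₂ : ℝ)
    (hR₁ : 0 < R₁) (hc : 0 < c) (hc' : 0 < c') (hβ₁ : 0 < β₁) (hβ : β₁ ≤ β₂)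
    (hpoly : PolyCond ν R₁ c c' β₁ β₂) :
    (∀ a : ℝ, 0 < a → ∃ c₁ : ℝ, 0 < c₁ ∧
      ∀ lam : ℝ, a < lam →
        |deriv (deriv (laplaceExp ν)) lam| ≤ c₁ * lam⁻¹ * deriv (laplaceExp ν) lam) ∧
    (R₁ = ⊤ → ∃ c₁ : ℝ, 0 < c₁ ∧
      ∀ lam : ℝ, 0 < lam →
        |deriv (deriv (laplaceExp ν)) lam| ≤ c₁ * lam⁻¹ * deriv (laplaceExp ν) lam) := by
  obtain ⟨κ, hκ, hκc⟩ := exists_kappa hc hβ₁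
  have hκ0 : (0:ℝ) < κ := lt_trans one_pos hκ
  -- a uniform reduction
  have main : ∀ lam T δ : ℝ, 0 < lam → 0 < T → 0 < δ → lam * T ≤ 1 → δ ≤ lam * T →
      ENNReal.ofReal T < R₁ →
      |deriv (deriv (laplaceExp ν)) lam| ≤
        (1 + 4 * κ * Real.exp 1 / δ) * lam⁻¹ * deriv (laplaceExp ν) lam := by
    intro lam T δ hlam hT hδ h1 h2 hTR
    rw [deriv2_laplace hν hlam, deriv_laplace hν hlam, abs_neg,
      abs_of_nonneg (integral_nonneg_of_ae ?_)]
    · exact key_estimate hν hc hpoly hκ hκc hlam hT hδ h1 h2 hTR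
    · filter_upwards [ae_pos hν] with s hs
      exact mul_nonneg (sq_nonneg s) (Real.exp_pos _).le
  constructor
  · intro a ha
    -- choose ρ with ofReal ρ < R₁
    obtain ⟨ρ, hρ, hρR⟩ : ∃ ρ : ℝ, 0 < ρ ∧ ENNReal.ofReal ρ < R₁ := by
      rcases eq_or_ne R₁ ⊤ with h | h
      · exact ⟨1, one_pos, by simp [h]⟩
      · have htR : 0 < R₁.toReal := ENNReal.toReal_pos hR₁.ne' h
        refine ⟨R₁.toReal / 2, by positivity, ?_⟩
        rw [ENNReal.ofReal_lt_iff_lt_toReal (by positivity) h]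
        linarith
    set δ := min 1 (a * ρ) with hδdef
    have hδ : 0 < δ := lt_min one_pos (by positivity)
    refine ⟨1 + 4 * κ * Real.exp 1 / δ, by positivity, ?_⟩
    intro lam hlam
    have hlam0 : 0 < lam := lt_trans ha hlam
    set T := min lam⁻¹ ρ with hTdef
    have hT : 0 < T := lt_min (by positivity) hρ
    have h1 : lam * T ≤ 1 := by
      have : T ≤ lam⁻¹ := min_le_left _ _
      calc lam * T ≤ lam * lam⁻¹ := mul_le_mul_of_nonneg_left this hlam0.le
        _ = 1 := mul_inv_cancel₀ hlam0.ne'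
    have h2 : δ ≤ lam * T := by
      rcases le_total lam⁻¹ ρ with h | h
      · rw [hTdef, min_eq_left h, mul_inv_cancel₀ hlam0.ne']
        exact min_le_left _ _
      · rw [hTdef, min_eq_right h]
        exact le_trans (min_le_right _ _) (by nlinarith)
    have hTR : ENNReal.ofReal T < R₁ :=
      lt_of_le_of_lt (ENNReal.ofReal_le_ofReal (min_le_right _ _)) hρR
    exact main lam T δ hlam0 hT hδ h1 h2 hTR
  · intro hR
    refine ⟨1 + 4 * κ * Real.exp 1 / 1, by positivity, ?_⟩
    intro lam hlam
    have h1 : lam * lam⁻¹ ≤ 1 := le_of_eq (mul_inv_cancel₀ hlam.ne')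
    have h2 : (1:ℝ) ≤ lam * lam⁻¹ := le_of_eq (mul_inv_cancel₀ hlam.ne').symm
    exact main lam lam⁻¹ 1 hlam (by positivity) one_pos h1 h2 (by simp [hR])
end

section
/- Suppose (Poly-R₁) holds. Then for any a>0 there exists δ=δ(a)>0 such that σ(t,u)/σ(t,s) ≥ 2^{−δ}(s/u)^{δ} for all t>0 and all 0<u≤s≤tφ′(a). Moreover, if (Poly-∞) holds, then the same inequality holds for all t>0 and all 0<u≤s<tφ′(0+). -/
open MeasureTheory Real Set
open scoped ENNReal

noncomputable def psiFun (ν : Measure ℝ) (lam : ℝ) : ℝ :=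
  ∫ s, s * Real.exp (-(lam * s)) ∂ν

lemma lm_ae_pos (ν : Measure ℝ) (hν : IsLevyMeasure ν) : ∀ᵐ s ∂ν, s ∈ Set.Ioi (0:ℝ) := by
  rw [MeasureTheory.ae_iff]
  convert hν.supp using 2
  ext x; simp [not_lt]

lemma lm_exp_mul_le {c y : ℝ} (hc : 0 < c) (hy : 0 ≤ y) :
    y * Real.exp (-(c * y)) ≤ 1 / (Real.exp 1 * c) := by
  have h1 : c * y ≤ Real.exp (c * y - 1) := by
    have := Real.add_one_le_exp (c * y - 1); linarith
  have h2 : Real.exp (c * y - 1) * Real.exp (-(c * y)) = (Real.exp 1)⁻¹ := by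
    rw [← Real.exp_add, ← Real.exp_neg]; ring_nf
  have h3 : c * y * Real.exp (-(c * y)) ≤ (Real.exp 1)⁻¹ := by
    calc c * y * Real.exp (-(c * y)) ≤ Real.exp (c * y - 1) * Real.exp (-(c * y)) :=
      mul_le_mul_of_nonneg_right h1 (Real.exp_pos _).le
    _ = (Real.exp 1)⁻¹ := h2
  have hep : (0:ℝ) < Real.exp 1 := Real.exp_pos 1
  have key : y * Real.exp (-(c * y)) ≤ (Real.exp 1)⁻¹ / c := by
    rw [le_div_iff₀ hc]
    calc y * Real.exp (-(c * y)) * c = c * y * Real.exp (-(c * y)) := by ring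
    _ ≤ (Real.exp 1)⁻¹ := h3
  calc y * Real.exp (-(c * y)) ≤ (Real.exp 1)⁻¹ / c := key
  _ = 1 / (Real.exp 1 * c) := by field_simp

lemma lm_integrable_bound (ν : Measure ℝ) (hν : IsLevyMeasure ν) {g : ℝ → ℝ}
    (hg : Continuous g) (C1 C2 : ℝ)
    (h1 : ∀ s : ℝ, 0 < s → s ≤ 1 → ‖g s‖ ≤ C1 * s)
    (h2 : ∀ s : ℝ, 1 < s → ‖g s‖ ≤ C2) : Integrable g ν := by
  set G : ℝ → ℝ := (Set.Ioc (0:ℝ) 1).indicator (fun s => C1 * s)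
      + (Set.Ioi (1:ℝ)).indicator (fun _ => C2) with hG
  have hGint : Integrable G ν := by
    apply Integrable.add
    · rw [integrable_indicator_iff measurableSet_Ioc]
      exact hν.integ.const_mul C1
    · rw [integrable_indicator_iff measurableSet_Ioi]
      exact integrableOn_const (hν.tail_fin 1 one_pos).ne
  refine Integrable.mono' hGint hg.aestronglyMeasurable ?_
  filter_upwards [lm_ae_pos ν hν] with s hs
  rcases le_or_gt s 1 with h | h
  · have : G s = C1 * s := by
      have hmem : s ∈ Set.Ioc (0:ℝ) 1 := ⟨hs, h⟩
      have hnot : s ∉ Set.Ioi (1:ℝ) := by simp [Set.mem_Ioi, not_lt.mpr h]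
      simp [hG, Set.indicator_of_mem hmem, Set.indicator_of_notMem hnot]
    rw [this]; exact h1 s hs h
  · have : G s = C2 := by
      have hmem : s ∈ Set.Ioi (1:ℝ) := h
      have hnot : s ∉ Set.Ioc (0:ℝ) 1 := by simp [Set.mem_Ioc, not_le.mpr h]
      simp [hG, Set.indicator_of_mem hmem, Set.indicator_of_notMem hnot]
    rw [this]; exact h2 s h

lemma lm_integrable_psi (ν : Measure ℝ) (hν : IsLevyMeasure ν) {lam : ℝ} (hlam : 0 < lam) :
    Integrable (fun s => s * Real.exp (-(lam * s))) ν := by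
  apply lm_integrable_bound ν hν (by continuity) 1 (1 / (Real.exp 1 * lam))
  · intro s hs hs1
    have he : Real.exp (-(lam * s)) ≤ 1 :=
      Real.exp_le_one_iff.mpr (by nlinarith)
    rw [Real.norm_eq_abs, abs_of_nonneg (by positivity)]
    nlinarith
  · intro s hs
    rw [Real.norm_eq_abs, abs_of_nonneg (by positivity)]
    exact lm_exp_mul_le hlam (by linarith)

lemma lm_integrable_one_sub (ν : Measure ℝ) (hν : IsLevyMeasure ν) {lam : ℝ} (hlam : 0 < lam) :
    Integrable (fun s => 1 - Real.exp (-(lam * s))) ν := by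
  apply lm_integrable_bound ν hν (by continuity) lam 1
  · intro s hs hs1
    rw [Real.norm_eq_abs]
    have h1 : Real.exp (-(lam * s)) ≤ 1 := Real.exp_le_one_iff.mpr (by nlinarith)
    have h2 : 1 - lam * s ≤ Real.exp (-(lam * s)) := by
      have := Real.add_one_le_exp (-(lam * s)); linarith
    rw [abs_of_nonneg (by linarith)]; linarith
  · intro s hs
    rw [Real.norm_eq_abs]
    have h1 : Real.exp (-(lam * s)) ≤ 1 := Real.exp_le_one_iff.mpr (by nlinarith)
    have h2 : 0 < Real.exp (-(lam * s)) := Real.exp_pos _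
    rw [abs_of_nonneg (by linarith)]; linarith

lemma lm_integral_pos (ν : Measure ℝ) (hν : IsLevyMeasure ν)
    (hmass : ∃ R : ℝ, 0 < R ∧ 0 < ν (Set.Ioi R)) {g : ℝ → ℝ}
    (hint : Integrable g ν) (hpos : ∀ s : ℝ, 0 < s → 0 < g s) :
    0 < ∫ s, g s ∂ν := by
  rw [integral_pos_iff_support_of_nonneg_ae ?_ hint]
  · obtain ⟨R, hR, hm⟩ := hmass
    refine lt_of_lt_of_le hm (measure_mono ?_)
    intro s hs
    exact (hpos s (hR.trans hs)).ne'
  · filter_upwards [lm_ae_pos ν hν] with s hs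
    exact (hpos s hs).le

lemma lm_psi_pos (ν : Measure ℝ) (hν : IsLevyMeasure ν)
    (hmass : ∃ R : ℝ, 0 < R ∧ 0 < ν (Set.Ioi R)) {lam : ℝ} (hlam : 0 < lam) :
    0 < psiFun ν lam := by
  apply lm_integral_pos ν hν hmass (lm_integrable_psi ν hν hlam)
  intro s hs; positivity

lemma lm_psi_strictAnti (ν : Measure ℝ) (hν : IsLevyMeasure ν)
    (hmass : ∃ R : ℝ, 0 < R ∧ 0 < ν (Set.Ioi R)) :
    StrictAntiOn (psiFun ν) (Set.Ioi (0:ℝ)) := by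
  intro x hx y hy hxy
  simp only [Set.mem_Ioi] at hx hy
  have key : 0 < psiFun ν x - psiFun ν y := by
    rw [psiFun, psiFun, ← integral_sub (lm_integrable_psi ν hν hx) (lm_integrable_psi ν hν hy)]
    apply lm_integral_pos ν hν hmass
      ((lm_integrable_psi ν hν hx).sub (lm_integrable_psi ν hν hy))
    intro s hs
    simp only [Pi.sub_apply]
    have : Real.exp (-(y * s)) < Real.exp (-(x * s)) := by
      apply Real.exp_lt_exp.mpr; nlinarith
    nlinarith
  linarith

lemma lm_psi_antitone (ν : Measure ℝ) (hν : IsLevyMeasure ν)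
    (hmass : ∃ R : ℝ, 0 < R ∧ 0 < ν (Set.Ioi R)) :
    AntitoneOn (psiFun ν) (Set.Ioi (0:ℝ)) :=
  (lm_psi_strictAnti ν hν hmass).antitoneOn

lemma lm_hasDerivAt (ν : Measure ℝ) (hν : IsLevyMeasure ν) {lam : ℝ} (hlam : 0 < lam) :
    HasDerivAt (laplaceExp ν) (psiFun ν lam) lam := by
  have key := hasDerivAt_integral_of_dominated_loc_of_deriv_le (μ := ν)
    (F := fun x s => 1 - Real.exp (-(x * s)))
    (F' := fun x s => s * Real.exp (-(x * s))) (x₀ := lam)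
    (bound := fun s => s * Real.exp (-(lam / 2 * s))) (Metric.ball_mem_nhds lam (half_pos hlam))
    (Filter.Eventually.of_forall fun x =>
      (Continuous.aestronglyMeasurable (by continuity)))
    (lm_integrable_one_sub ν hν hlam)
    (Continuous.aestronglyMeasurable (by continuity))
    ?_ (lm_integrable_psi ν hν (half_pos hlam)) ?_
  · exact key.2
  · filter_upwards [lm_ae_pos ν hν] with s hs x hx
    simp only [Metric.mem_ball, Real.dist_eq] at hx
    have hx2 : lam / 2 < x := by
      rcases abs_lt.mp hx with ⟨h1, h2⟩; linarith
    simp only [Set.mem_Ioi] at hs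
    rw [Real.norm_eq_abs, abs_of_nonneg (by positivity)]
    have : Real.exp (-(x * s)) ≤ Real.exp (-(lam / 2 * s)) := by
      apply Real.exp_le_exp.mpr; nlinarith
    nlinarith
  · refine Filter.Eventually.of_forall fun s x _ => ?_
    have h1 : HasDerivAt (fun x : ℝ => -(x * s)) (-s) x := (hasDerivAt_mul_const s).neg
    have h2 := (h1.exp).const_sub 1
    convert h2 using 1
    ring

lemma lm_deriv_eq (ν : Measure ℝ) (hν : IsLevyMeasure ν) {lam : ℝ} (hlam : 0 < lam) :
    deriv (laplaceExp ν) lam = psiFun ν lam :=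
  (lm_hasDerivAt ν hν hlam).deriv

lemma lm_psi_split (ν : Measure ℝ) (hν : IsLevyMeasure ν) {lam η : ℝ}
    (hlam : 0 < lam) (hη : 0 < η) :
    psiFun ν lam = (∫ s in Set.Ioc 0 η, s * Real.exp (-(lam * s)) ∂ν)
      + ∫ s in Set.Ioi η, s * Real.exp (-(lam * s)) ∂ν := by
  have hint := lm_integrable_psi ν hν hlam
  have h0 : psiFun ν lam = ∫ s in Set.Ioi 0, s * Real.exp (-(lam * s)) ∂ν := by
    rw [psiFun, ← integral_add_compl measurableSet_Iic hint, Set.compl_Iic]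
    have hz : ν.restrict (Set.Iic 0) = 0 := Measure.restrict_eq_zero.mpr hν.supp
    rw [hz]
    simp
  rw [h0, ← Set.Ioc_union_Ioi_eq_Ioi hη.le,
    setIntegral_union (Set.Ioc_disjoint_Ioi le_rfl) measurableSet_Ioi
      hint.integrableOn hint.integrableOn]

lemma lm_measure_Ioc (ν : Measure ℝ) (hν : IsLevyMeasure ν) {r R : ℝ}
    (hr : 0 < r) (hrR : r ≤ R) :
    (ν (Set.Ioc r R)).toReal = levyTail ν r - levyTail ν R := by
  have hsub : Set.Ioi R ⊆ Set.Ioi r := Set.Ioi_subset_Ioi hrR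
  have hdiff : Set.Ioc r R = Set.Ioi r \ Set.Ioi R := by
    ext x; simp only [Set.mem_Ioc, Set.mem_diff, Set.mem_Ioi, not_lt]
  rw [hdiff, measure_diff hsub measurableSet_Ioi.nullMeasurableSet
    (hν.tail_fin R (hr.trans_le hrR)).ne]
  rw [ENNReal.toReal_sub_of_le (measure_mono hsub) (hν.tail_fin r hr).ne]
  rfl

lemma lm_mass (ν : Measure ℝ) (R₁ : ℝ≥0∞) (c c' β₁ β₂ : ℝ)
    (hR₁ : 0 < R₁) (hc : 0 < c) (hpoly : PolyCond ν R₁ c c' β₁ β₂) :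
    ∃ R : ℝ, 0 < R ∧ 0 < ν (Set.Ioi R) := by
  obtain ⟨R, hR0, hRlt⟩ : ∃ R : ℝ, 0 < R ∧ ENNReal.ofReal R < R₁ := by
    by_cases hT : R₁ = ⊤
    · exact ⟨1, one_pos, by simp [hT]⟩
    · have htp : 0 < R₁.toReal := ENNReal.toReal_pos hR₁.ne' hT
      refine ⟨R₁.toReal / 2, by linarith, ?_⟩
      rw [ENNReal.ofReal_lt_iff_lt_toReal (by linarith) hT]
      linarith
  refine ⟨R, hR0, ?_⟩
  by_contra h0
  have hz : ν (Set.Ioi R) = 0 := by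
    rcases eq_or_lt_of_le (zero_le : 0 ≤ ν (Set.Ioi R)) with h | h
    · exact h.symm
    · exact absurd h h0
  have h := (hpoly R R hR0 le_rfl hRlt).1
  rw [div_self hR0.ne', Real.one_rpow, mul_one] at h
  have hw : levyTail ν R = 0 := by rw [levyTail, hz]; simp
  rw [hw] at h
  simp at h
  linarith

lemma lm_halving_poly (ν : Measure ℝ) (hν : IsLevyMeasure ν)
    (R₁ : ℝ≥0∞) (c c' β₁ β₂ : ℝ) (hc : 0 < c) (hβ₁ : 0 < β₁)
    (hpoly : PolyCond ν R₁ c c' β₁ β₂)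
    (K : ℝ) (hK1 : 1 ≤ K) (hK : 2 ≤ c * K ^ β₁)
    {lam : ℝ} (hlam : 0 < lam) (hR : ENNReal.ofReal (1 / lam) < R₁) :
    psiFun ν (lam / 2) ≤ (Real.exp 1 + 2 * K) * psiFun ν lam := by
  set η : ℝ := 1 / lam with hη
  set r : ℝ := 1 / (K * lam) with hr
  have hK0 : 0 < K := lt_of_lt_of_le one_pos hK1
  have hη0 : 0 < η := by positivity
  have hr0 : 0 < r := by positivity
  have hrη : r ≤ η := by
    rw [hr, hη, div_le_div_iff₀ (by positivity) hlam]
    nlinarith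
  have hηr : η / r = K := by rw [hη, hr]; field_simp
  -- Poly lower bound at (r, η)
  have hp := (hpoly r η hr0 hrη hR).1
  rw [hηr] at hp
  have hwfin : ∀ x : ℝ, 0 < x → levyTail ν x = (ν (Set.Ioi x)).toReal := fun _ _ => rfl
  have hwη_pos : 0 < levyTail ν η := by
    rcases lt_or_ge 0 (levyTail ν η) with h | h
    · exact h
    have h0 : levyTail ν η = 0 := le_antisymm h ENNReal.toReal_nonneg
    rw [h0, div_zero] at hp
    nlinarith
  have hwr : 2 * levyTail ν η ≤ levyTail ν r := by
    have h2 : 2 ≤ levyTail ν r / levyTail ν η := le_trans hK hp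
    rw [le_div_iff₀ hwη_pos] at h2
    linarith
  have hint := lm_integrable_psi ν hν hlam
  have hint2 := lm_integrable_psi ν hν (half_pos hlam)
  have hexp1 : (0:ℝ) < Real.exp 1 := Real.exp_pos 1
  -- L2 : lower bound of psi lam via Ioc r η
  have hL2 : r * Real.exp (-1) * levyTail ν η ≤ psiFun ν lam := by
    have hmono : ∀ x ∈ Set.Ioc r η, r * Real.exp (-1) ≤ x * Real.exp (-(lam * x)) := by
      intro x hx
      obtain ⟨hx1, hx2⟩ := hx
      have he : Real.exp (-1) ≤ Real.exp (-(lam * x)) := by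
        apply Real.exp_le_exp.mpr
        have : lam * x ≤ lam * η := by nlinarith
        rw [hη] at this
        rw [neg_le_neg_iff]
        calc lam * x ≤ lam * (1 / lam) := this
        _ = 1 := by field_simp
      have hx0 : r ≤ x := hx1.le
      nlinarith [Real.exp_pos (-(lam * x))]
    have hfin : ν (Set.Ioc r η) < ⊤ :=
      (measure_mono Set.Ioc_subset_Ioi_self).trans_lt (hν.tail_fin r hr0)
    have hstep : ∫ x in Set.Ioc r η, (r * Real.exp (-1)) ∂ν
        ≤ ∫ x in Set.Ioc r η, x * Real.exp (-(lam * x)) ∂ν := by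
      apply setIntegral_mono_on (integrableOn_const hfin.ne)
        hint.integrableOn measurableSet_Ioc hmono
    have hconst : ∫ _ in Set.Ioc r η, (r * Real.exp (-1)) ∂ν
        = (levyTail ν r - levyTail ν η) * (r * Real.exp (-1)) := by
      rw [setIntegral_const, measureReal_def, lm_measure_Ioc ν hν hr0 hrη]
      simp [smul_eq_mul]
    have hsub : ∫ x in Set.Ioc r η, x * Real.exp (-(lam * x)) ∂ν ≤ psiFun ν lam := by
      apply setIntegral_le_integral hint
      filter_upwards [lm_ae_pos ν hν] with s hs
      simp only [Set.mem_Ioi] at hs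
      positivity
    have : (levyTail ν r - levyTail ν η) * (r * Real.exp (-1)) ≤ psiFun ν lam := by
      rw [← hconst]; exact hstep.trans hsub
    calc r * Real.exp (-1) * levyTail ν η = levyTail ν η * (r * Real.exp (-1)) := by ring
    _ ≤ (levyTail ν r - levyTail ν η) * (r * Real.exp (-1)) := by
          apply mul_le_mul_of_nonneg_right (by linarith) (by positivity)
    _ ≤ psiFun ν lam := this
  -- upper bound pieces for psi (lam/2)
  have hsplit := lm_psi_split ν hν (half_pos hlam) hη0
  -- piece 1
  have hU1 : ∫ s in Set.Ioc 0 η, s * Real.exp (-(lam / 2 * s)) ∂ν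
      ≤ Real.exp 1 * psiFun ν lam := by
    have hmono : ∀ x ∈ Set.Ioc 0 η, x * Real.exp (-(lam / 2 * x))
        ≤ Real.exp 1 * (x * Real.exp (-(lam * x))) := by
      intro x hx
      obtain ⟨hx1, hx2⟩ := hx
      have h1 : lam * x ≤ 1 := by
        calc lam * x ≤ lam * η := by nlinarith
        _ = 1 := by rw [hη]; field_simp
      have he : Real.exp (-(lam / 2 * x)) ≤ Real.exp 1 * Real.exp (-(lam * x)) := by
        rw [← Real.exp_add]
        apply Real.exp_le_exp.mpr
        linarith
      calc x * Real.exp (-(lam / 2 * x)) ≤ x * (Real.exp 1 * Real.exp (-(lam * x))) := by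
            apply mul_le_mul_of_nonneg_left he hx1.le
      _ = Real.exp 1 * (x * Real.exp (-(lam * x))) := by ring
    have hstep : ∫ x in Set.Ioc 0 η, x * Real.exp (-(lam / 2 * x)) ∂ν
        ≤ ∫ x in Set.Ioc 0 η, Real.exp 1 * (x * Real.exp (-(lam * x))) ∂ν :=
      setIntegral_mono_on hint2.integrableOn (hint.const_mul _).integrableOn
        measurableSet_Ioc hmono
    have hsub : ∫ x in Set.Ioc 0 η, Real.exp 1 * (x * Real.exp (-(lam * x))) ∂ν
        ≤ Real.exp 1 * psiFun ν lam := by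
      rw [integral_const_mul]
      apply mul_le_mul_of_nonneg_left _ hexp1.le
      apply setIntegral_le_integral hint
      filter_upwards [lm_ae_pos ν hν] with s hs
      simp only [Set.mem_Ioi] at hs
      positivity
    exact hstep.trans hsub
  -- piece 2
  have hU2 : ∫ s in Set.Ioi η, s * Real.exp (-(lam / 2 * s)) ∂ν
      ≤ 2 * K * psiFun ν lam := by
    have hbd : ∀ x ∈ Set.Ioi η, x * Real.exp (-(lam / 2 * x)) ≤ 1 / (Real.exp 1 * (lam / 2)) := by
      intro x hx
      simp only [Set.mem_Ioi] at hx
      have : x * Real.exp (-(lam / 2 * x)) ≤ 1 / (Real.exp 1 * (lam / 2)) :=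
        lm_exp_mul_le (half_pos hlam) (le_of_lt (hη0.trans hx))
      exact this
    have hfin : ν (Set.Ioi η) < ⊤ := hν.tail_fin η hη0
    have hstep : ∫ x in Set.Ioi η, x * Real.exp (-(lam / 2 * x)) ∂ν
        ≤ ∫ _ in Set.Ioi η, (1 / (Real.exp 1 * (lam / 2))) ∂ν :=
      setIntegral_mono_on hint2.integrableOn (integrableOn_const hfin.ne)
        measurableSet_Ioi hbd
    have hconst : ∫ _ in Set.Ioi η, (1 / (Real.exp 1 * (lam / 2))) ∂ν
        = levyTail ν η * (1 / (Real.exp 1 * (lam / 2))) := by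
      rw [setIntegral_const]; rfl
    -- use hL2 : r * exp(-1) * w η ≤ psi lam, i.e. w η ≤ exp 1 * K * lam * psi lam
    have hwbound : levyTail ν η ≤ Real.exp 1 * K * lam * psiFun ν lam := by
      have h1 : r * Real.exp (-1) * levyTail ν η ≤ psiFun ν lam := hL2
      have hre : r * Real.exp (-1) = (Real.exp 1 * K * lam)⁻¹ := by
        rw [hr, Real.exp_neg]
        rw [mul_inv, mul_inv]
        field_simp
      rw [hre] at h1
      rwa [inv_mul_le_iff₀ (by positivity)] at h1
    calc ∫ x in Set.Ioi η, x * Real.exp (-(lam / 2 * x)) ∂ν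
        ≤ levyTail ν η * (1 / (Real.exp 1 * (lam / 2))) := hstep.trans_eq hconst
    _ ≤ (Real.exp 1 * K * lam * psiFun ν lam) * (1 / (Real.exp 1 * (lam / 2))) := by
        apply mul_le_mul_of_nonneg_right hwbound (by positivity)
    _ = 2 * K * psiFun ν lam := by field_simp
  rw [hsplit]
  linarith

lemma lm_K_exists {c β₁ : ℝ} (hc : 0 < c) (hβ₁ : 0 < β₁) :
    ∃ K : ℝ, 1 ≤ K ∧ 2 ≤ c * K ^ β₁ := by
  refine ⟨max 1 ((2 / c) ^ (1 / β₁)), le_max_left _ _, ?_⟩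
  have h2c : (0:ℝ) < 2 / c := by positivity
  have h1 : ((2 / c) ^ (1 / β₁) : ℝ) ^ β₁ = 2 / c := by
    rw [← Real.rpow_mul h2c.le, one_div, inv_mul_cancel₀ hβ₁.ne', Real.rpow_one]
  have hKb : (2 / c) ≤ (max 1 ((2 / c) ^ (1 / β₁))) ^ β₁ := by
    conv_lhs => rw [← h1]
    apply Real.rpow_le_rpow (Real.rpow_nonneg h2c.le _) (le_max_right _ _) hβ₁.le
  calc (2:ℝ) = c * (2 / c) := by field_simp
  _ ≤ c * (max 1 ((2 / c) ^ (1 / β₁))) ^ β₁ := mul_le_mul_of_nonneg_left hKb hc.le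

lemma lm_halving_all (ν : Measure ℝ) (hν : IsLevyMeasure ν)
    (R₁ : ℝ≥0∞) (c c' β₁ β₂ : ℝ) (hR₁ : 0 < R₁) (hc : 0 < c) (hβ₁ : 0 < β₁)
    (hpoly : PolyCond ν R₁ c c' β₁ β₂) {a : ℝ} (ha : 0 < a) :
    ∃ M : ℝ, 1 ≤ M ∧ ∀ lam : ℝ, a ≤ lam → psiFun ν (lam / 2) ≤ M * psiFun ν lam := by
  obtain ⟨K, hK1, hK⟩ := lm_K_exists hc hβ₁
  have hmass := lm_mass ν R₁ c c' β₁ β₂ hR₁ hc hpoly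
  have hK0 : (0:ℝ) < K := lt_of_lt_of_le one_pos hK1
  have hexp1 : (1:ℝ) ≤ Real.exp 1 := by
    have := Real.add_one_le_exp (1:ℝ); linarith
  set M₀ : ℝ := Real.exp 1 + 2 * K with hM₀
  have hM₀1 : 1 ≤ M₀ := by rw [hM₀]; nlinarith
  by_cases hT : R₁ = ⊤
  · refine ⟨M₀, hM₀1, fun lam hlam => ?_⟩
    exact lm_halving_poly ν hν R₁ c c' β₁ β₂ hc hβ₁ hpoly K hK1 hK (ha.trans_le hlam)
      (by rw [hT]; exact ENNReal.ofReal_lt_top)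
  · set b : ℝ := 2 / R₁.toReal with hb
    have htp : 0 < R₁.toReal := ENNReal.toReal_pos hR₁.ne' hT
    have hb0 : 0 < b := by positivity
    have hψb : 0 < psiFun ν b := lm_psi_pos ν hν hmass hb0
    set M₁ : ℝ := psiFun ν (a / 2) / psiFun ν b with hM₁
    have hM₁0 : 0 ≤ M₁ :=
      div_nonneg (lm_psi_pos ν hν hmass (half_pos ha)).le hψb.le
    refine ⟨max M₀ M₁, le_trans hM₀1 (le_max_left _ _), fun lam hlam => ?_⟩
    have hlam0 : 0 < lam := ha.trans_le hlam
    have hψlam : 0 < psiFun ν lam := lm_psi_pos ν hν hmass hlam0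
    rcases le_or_gt b lam with hble | hblt
    · have hR : ENNReal.ofReal (1 / lam) < R₁ := by
        rw [ENNReal.ofReal_lt_iff_lt_toReal (by positivity) hT]
        have h1 : 1 / lam ≤ 1 / b := by
          apply div_le_div_of_nonneg_left one_pos.le hb0 hble
        have h2 : 1 / b = R₁.toReal / 2 := by rw [hb]; field_simp
        linarith
      calc psiFun ν (lam / 2) ≤ M₀ * psiFun ν lam :=
        lm_halving_poly ν hν R₁ c c' β₁ β₂ hc hβ₁ hpoly K hK1 hK hlam0 hR
      _ ≤ max M₀ M₁ * psiFun ν lam :=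
        mul_le_mul_of_nonneg_right (le_max_left _ _) hψlam.le
    · have hanti := lm_psi_antitone ν hν hmass
      have h1 : psiFun ν (lam / 2) ≤ psiFun ν (a / 2) := by
        apply hanti (Set.mem_Ioi.mpr (half_pos ha)) (Set.mem_Ioi.mpr (half_pos hlam0))
        linarith
      have h2 : psiFun ν b ≤ psiFun ν lam :=
        hanti (Set.mem_Ioi.mpr hlam0) (Set.mem_Ioi.mpr hb0) hblt.le
      calc psiFun ν (lam / 2) ≤ psiFun ν (a / 2) := h1
      _ = M₁ * psiFun ν b := by rw [hM₁]; field_simp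
      _ ≤ M₁ * psiFun ν lam := mul_le_mul_of_nonneg_left h2 hM₁0
      _ ≤ max M₀ M₁ * psiFun ν lam :=
        mul_le_mul_of_nonneg_right (le_max_right _ _) hψlam.le

lemma lm_ptwise {θ lam s : ℝ} (hθ : 1 ≤ θ) (hlam : 0 < lam) (hs : 0 < s) :
    s * Real.exp (-(lam * s)) - s * Real.exp (-(θ * lam * s))
      ≤ (θ - 1) * (2 / Real.exp 1) * (s * Real.exp (-(lam / 2 * s))) := by
  have hE : Real.exp (-(lam * s)) = Real.exp (-(lam / 2 * s)) * Real.exp (-(lam / 2 * s)) := by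
    rw [← Real.exp_add]; ring_nf
  have hsplit : Real.exp (-(θ * lam * s))
      = Real.exp (-(lam * s)) * Real.exp (-((θ - 1) * lam * s)) := by
    rw [← Real.exp_add]; ring_nf
  have h1exp : 1 - Real.exp (-((θ - 1) * lam * s)) ≤ (θ - 1) * lam * s := by
    have := Real.add_one_le_exp (-((θ - 1) * lam * s)); linarith
  have hstep1 : s * Real.exp (-(lam * s)) - s * Real.exp (-(θ * lam * s))
      ≤ (θ - 1) * lam * s * (s * Real.exp (-(lam * s))) := by
    rw [hsplit]
    have heq : s * Real.exp (-(lam * s)) - s * (Real.exp (-(lam * s)) * Real.exp (-((θ - 1) * lam * s)))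
        = s * Real.exp (-(lam * s)) * (1 - Real.exp (-((θ - 1) * lam * s))) := by ring
    rw [heq]
    have hnn : 0 ≤ s * Real.exp (-(lam * s)) := by positivity
    calc s * Real.exp (-(lam * s)) * (1 - Real.exp (-((θ - 1) * lam * s)))
        ≤ s * Real.exp (-(lam * s)) * ((θ - 1) * lam * s) :=
          mul_le_mul_of_nonneg_left h1exp hnn
    _ = (θ - 1) * lam * s * (s * Real.exp (-(lam * s))) := by ring
  have hbd : s * Real.exp (-(lam / 2 * s)) ≤ 1 / (Real.exp 1 * (lam / 2)) :=
    lm_exp_mul_le (half_pos hlam) hs.le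
  have hnn2 : 0 ≤ s * Real.exp (-(lam / 2 * s)) := by positivity
  have hstep2 : (θ - 1) * lam * s * (s * Real.exp (-(lam * s)))
      ≤ (θ - 1) * (2 / Real.exp 1) * (s * Real.exp (-(lam / 2 * s))) := by
    have h2 : lam * s * (s * Real.exp (-(lam * s)))
        = lam * (s * Real.exp (-(lam / 2 * s))) * (s * Real.exp (-(lam / 2 * s))) := by
      rw [hE]; ring
    have h3 : lam * (s * Real.exp (-(lam / 2 * s))) ≤ lam * (1 / (Real.exp 1 * (lam / 2))) :=
      mul_le_mul_of_nonneg_left hbd hlam.le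
    have h4 : lam * (1 / (Real.exp 1 * (lam / 2))) = 2 / Real.exp 1 := by
      field_simp
    have hkey : lam * s * (s * Real.exp (-(lam * s)))
        ≤ (2 / Real.exp 1) * (s * Real.exp (-(lam / 2 * s))) := by
      rw [h2]
      calc lam * (s * Real.exp (-(lam / 2 * s))) * (s * Real.exp (-(lam / 2 * s)))
          ≤ lam * (1 / (Real.exp 1 * (lam / 2))) * (s * Real.exp (-(lam / 2 * s))) :=
            mul_le_mul_of_nonneg_right h3 hnn2
      _ = 2 / Real.exp 1 * (s * Real.exp (-(lam / 2 * s))) := by rw [h4]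
    calc (θ - 1) * lam * s * (s * Real.exp (-(lam * s)))
        = (θ - 1) * (lam * s * (s * Real.exp (-(lam * s)))) := by ring
    _ ≤ (θ - 1) * ((2 / Real.exp 1) * (s * Real.exp (-(lam / 2 * s)))) :=
        mul_le_mul_of_nonneg_left hkey (by linarith)
    _ = (θ - 1) * (2 / Real.exp 1) * (s * Real.exp (-(lam / 2 * s))) := by ring
  exact hstep1.trans hstep2

lemma lm_step (ν : Measure ℝ) (hν : IsLevyMeasure ν)
    (hmass : ∃ R : ℝ, 0 < R ∧ 0 < ν (Set.Ioi R)) (a M : ℝ) (ha : 0 < a) (hM : 1 ≤ M)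
    (hhalf : ∀ lam : ℝ, a ≤ lam → psiFun ν (lam / 2) ≤ M * psiFun ν lam) :
    ∀ lam : ℝ, a ≤ lam →
      psiFun ν lam ≤ 2 * psiFun ν ((1 + Real.exp 1 / (4 * M)) * lam) := by
  intro lam hlam
  have hexp1 : (0:ℝ) < Real.exp 1 := Real.exp_pos 1
  have hM0 : (0:ℝ) < M := lt_of_lt_of_le one_pos hM
  set θ : ℝ := 1 + Real.exp 1 / (4 * M) with hθdef
  have hθfrac : 0 < Real.exp 1 / (4 * M) := by positivity
  have hθ1 : 1 < θ := by rw [hθdef]; linarith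
  have hlam0 : 0 < lam := ha.trans_le hlam
  have hθlam0 : 0 < θ * lam := by positivity
  have hint := lm_integrable_psi ν hν hlam0
  have hintθ := lm_integrable_psi ν hν hθlam0
  have hint2 := lm_integrable_psi ν hν (half_pos hlam0)
  have hdiff : psiFun ν lam - psiFun ν (θ * lam)
      ≤ (θ - 1) * (2 / Real.exp 1) * psiFun ν (lam / 2) := by
    rw [psiFun, psiFun, ← integral_sub hint hintθ]
    have hmono : ∀ᵐ s ∂ν,
        s * Real.exp (-(lam * s)) - s * Real.exp (-(θ * lam * s))
          ≤ (θ - 1) * (2 / Real.exp 1) * (s * Real.exp (-(lam / 2 * s))) := by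
      filter_upwards [lm_ae_pos ν hν] with s hs
      exact lm_ptwise hθ1.le hlam0 (Set.mem_Ioi.mp hs)
    calc ∫ s, (s * Real.exp (-(lam * s)) - s * Real.exp (-(θ * lam * s))) ∂ν
        ≤ ∫ s, (θ - 1) * (2 / Real.exp 1) * (s * Real.exp (-(lam / 2 * s))) ∂ν :=
          integral_mono_ae (hint.sub hintθ) (hint2.const_mul _) hmono
    _ = (θ - 1) * (2 / Real.exp 1) * psiFun ν (lam / 2) := integral_const_mul _ _
  have hhalf' := hhalf lam hlam
  have hcoef : (θ - 1) * (2 / Real.exp 1) * M = 1 / 2 := by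
    rw [hθdef]; field_simp; ring
  have hchain : (θ - 1) * (2 / Real.exp 1) * psiFun ν (lam / 2)
      ≤ (θ - 1) * (2 / Real.exp 1) * (M * psiFun ν lam) :=
    mul_le_mul_of_nonneg_left hhalf' (mul_nonneg (by linarith) (by positivity))
  have heq2 : (θ - 1) * (2 / Real.exp 1) * (M * psiFun ν lam) = 1 / 2 * psiFun ν lam := by
    rw [← hcoef]; ring
  linarith

lemma lm_iter (ν : Measure ℝ) (a θ : ℝ) (ha : 0 < a) (hθ : 1 < θ)
    (hstep : ∀ lam : ℝ, a ≤ lam → psiFun ν lam ≤ 2 * psiFun ν (θ * lam)) :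
    ∀ (k : ℕ) (lam : ℝ), a ≤ lam → psiFun ν lam ≤ 2 ^ k * psiFun ν (θ ^ k * lam) := by
  intro k
  induction k with
  | zero => intro lam _; simp
  | succ n ih =>
    intro lam hlam
    have hlam0 : 0 < lam := ha.trans_le hlam
    have h1 : psiFun ν lam ≤ 2 * psiFun ν (θ * lam) := hstep lam hlam
    have h2 : psiFun ν (θ * lam) ≤ 2 ^ n * psiFun ν (θ ^ n * (θ * lam)) := by
      apply ih; nlinarith
    have h3 : θ ^ n * (θ * lam) = θ ^ (n + 1) * lam := by ring
    rw [h3] at h2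
    calc psiFun ν lam ≤ 2 * psiFun ν (θ * lam) := h1
    _ ≤ 2 * (2 ^ n * psiFun ν (θ ^ (n + 1) * lam)) := by linarith
    _ = 2 ^ (n + 1) * psiFun ν (θ ^ (n + 1) * lam) := by ring

lemma lm_core (ψ : ℝ → ℝ) (hanti : StrictAntiOn ψ (Set.Ioi (0:ℝ)))
    (θ : ℝ) (hθ : 1 < θ) (a₀ : ℝ) (ha₀ : 0 < a₀)
    (hiter : ∀ (k : ℕ) (lam : ℝ), a₀ ≤ lam → ψ lam ≤ 2 ^ k * ψ (θ ^ k * lam))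
    {lam Lam sv uv : ℝ} (hlam : a₀ ≤ lam) (hLam : 0 < Lam)
    (h1 : ψ lam = sv) (h2 : ψ Lam = uv) (huv : 0 < uv) (hle : uv ≤ sv) :
    (2:ℝ) ^ (-(Real.logb 2 θ)) * (sv / uv) ^ (Real.logb 2 θ) ≤ Lam / lam := by
  set δ : ℝ := Real.logb 2 θ with hδ
  have hθ0 : (0:ℝ) < θ := lt_trans one_pos hθ
  have hδpos : 0 < δ := Real.logb_pos one_lt_two hθ
  have hlam0 : 0 < lam := ha₀.trans_le hlam
  set x : ℝ := sv / uv with hx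
  have hx1 : 1 ≤ x := (one_le_div huv).mpr hle
  have hx0 : 0 < x := lt_of_lt_of_le one_pos hx1
  have hLamlam : lam ≤ Lam := by
    by_contra hcon
    push_neg at hcon
    have hlt := hanti (Set.mem_Ioi.mpr hLam) (Set.mem_Ioi.mpr hlam0) hcon
    rw [h1, h2] at hlt
    linarith
  set k : ℕ := ⌈Real.logb 2 x⌉₊ with hk
  have hxk : x ≤ (2:ℝ) ^ (k:ℝ) := by
    have h := Nat.le_ceil (Real.logb 2 x)
    calc x = (2:ℝ) ^ (Real.logb 2 x) := (Real.rpow_logb two_pos (by norm_num) hx0).symm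
    _ ≤ (2:ℝ) ^ (k:ℝ) := Real.rpow_le_rpow_of_exponent_le one_le_two h
  have hθδ : (2:ℝ) ^ δ = θ := Real.rpow_logb two_pos (by norm_num) hθ0
  rcases Nat.eq_zero_or_pos k with hk0 | hkpos
  · have hxeq : x = 1 := by
      apply le_antisymm _ hx1
      rw [hk0] at hxk
      simpa using hxk
    have hLHS : (2:ℝ) ^ (-δ) * x ^ δ ≤ 1 := by
      rw [hxeq, Real.one_rpow, mul_one]
      exact Real.rpow_le_one_of_one_le_of_nonpos one_le_two (by linarith)
    have hdivge : (1:ℝ) ≤ Lam / lam := (one_le_div hlam0).mpr hLamlam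
    linarith
  · obtain ⟨m, hm⟩ : ∃ m, k = m + 1 := ⟨k - 1, (Nat.succ_pred_eq_of_pos hkpos).symm⟩
    have hmx : (2:ℝ) ^ (m:ℝ) < x := by
      have hmk : m < k := by omega
      have hlt : (m:ℝ) < Real.logb 2 x := by exact_mod_cast Nat.lt_ceil.mp hmk
      calc (2:ℝ) ^ (m:ℝ) < (2:ℝ) ^ (Real.logb 2 x) :=
        Real.rpow_lt_rpow_of_exponent_lt one_lt_two hlt
      _ = x := Real.rpow_logb two_pos (by norm_num) hx0
    have hkey : θ ^ m * lam ≤ Lam := by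
      by_contra hcon
      push_neg at hcon
      have hmem : θ ^ m * lam ∈ Set.Ioi (0:ℝ) := Set.mem_Ioi.mpr (by positivity)
      have hps : ψ (θ ^ m * lam) < ψ Lam := hanti (Set.mem_Ioi.mpr hLam) hmem hcon
      have hiter' := hiter m lam hlam
      have hlt2 : sv < 2 ^ m * uv := by
        rw [← h1, ← h2]
        calc ψ lam ≤ 2 ^ m * ψ (θ ^ m * lam) := hiter'
        _ < 2 ^ m * ψ Lam := by
          apply mul_lt_mul_of_pos_left hps (by positivity)
      have hxlt : x < 2 ^ m := by
        rw [hx, div_lt_iff₀ huv]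
        linarith
      rw [← Real.rpow_natCast 2 m] at hxlt
      linarith
    have hfinal1 : (2:ℝ) ^ (-δ) * x ^ δ ≤ θ ^ m := by
      have hxδ : x ^ δ ≤ ((2:ℝ) ^ (k:ℝ)) ^ δ := Real.rpow_le_rpow hx0.le hxk hδpos.le
      have h5 : ((2:ℝ) ^ (k:ℝ)) ^ δ = (2:ℝ) ^ ((k:ℝ) * δ) := by
        rw [← Real.rpow_mul (by norm_num : (0:ℝ) ≤ 2)]
      calc (2:ℝ) ^ (-δ) * x ^ δ ≤ (2:ℝ) ^ (-δ) * (2:ℝ) ^ ((k:ℝ) * δ) := by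
            apply mul_le_mul_of_nonneg_left (hxδ.trans_eq h5) (Real.rpow_nonneg (by norm_num) _)
      _ = (2:ℝ) ^ (-δ + (k:ℝ) * δ) := by rw [← Real.rpow_add two_pos]
      _ = (2:ℝ) ^ (δ * (m:ℝ)) := by
            rw [hm]; push_cast; ring_nf
      _ = ((2:ℝ) ^ δ) ^ ((m:ℝ)) := by rw [← Real.rpow_mul (by norm_num : (0:ℝ) ≤ 2)]
      _ = θ ^ m := by rw [hθδ, Real.rpow_natCast]
    have hfinal2 : (θ:ℝ) ^ m ≤ Lam / lam := (le_div_iff₀ hlam0).mpr hkey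
    linarith

lemma lm_halving_top (ν : Measure ℝ) (hν : IsLevyMeasure ν)
    (R₁ : ℝ≥0∞) (c c' β₁ β₂ : ℝ) (hc : 0 < c) (hβ₁ : 0 < β₁)
    (hpoly : PolyCond ν R₁ c c' β₁ β₂) (hT : R₁ = ⊤) :
    ∃ M : ℝ, 1 ≤ M ∧ ∀ lam : ℝ, 0 < lam → psiFun ν (lam / 2) ≤ M * psiFun ν lam := by
  obtain ⟨K, hK1, hK⟩ := lm_K_exists hc hβ₁
  have hK0 : (0:ℝ) < K := lt_of_lt_of_le one_pos hK1
  have hexp1 : (1:ℝ) ≤ Real.exp 1 := by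
    have := Real.add_one_le_exp (1:ℝ); linarith
  refine ⟨Real.exp 1 + 2 * K, by nlinarith, fun lam hlam => ?_⟩
  exact lm_halving_poly ν hν R₁ c c' β₁ β₂ hc hβ₁ hpoly K hK1 hK hlam
    (by rw [hT]; exact ENNReal.ofReal_lt_top)


/-- Lemma 2.4: under (Poly-R₁), for any `a > 0` there is `δ = δ(a) > 0` such that
`σ(t,u)/σ(t,s) ≥ 2^{-δ} (s/u)^δ` for all `0 < u ≤ s ≤ t φ'(a)`; under (Poly-∞) the
inequality holds for all `0 < u ≤ s < t φ'(0+)`. -/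
theorem sigma_scaling
    (ν : Measure ℝ) (hν : IsLevyMeasure ν)
    (σ : ℝ → ℝ → ℝ) (hσ : IsSigmaFun ν σ)
    (R₁ : ℝ≥0∞) (c c' β₁ β₂ : ℝ)
    (hR₁ : 0 < R₁) (hc : 0 < c) (hc' : 0 < c') (hβ₁ : 0 < β₁) (hβ : β₁ ≤ β₂)
    (hpoly : PolyCond ν R₁ c c' β₁ β₂) :
    (∀ a : ℝ, 0 < a → ∃ δ : ℝ, 0 < δ ∧
      ∀ t u s : ℝ, 0 < t → 0 < u → u ≤ s → s ≤ t * deriv (laplaceExp ν) a →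
        (2:ℝ) ^ (-δ) * (s / u) ^ δ ≤ σ t u / σ t s) ∧
    (R₁ = ⊤ → ∃ δ : ℝ, 0 < δ ∧
      ∀ t u s : ℝ, 0 < t → 0 < u → u ≤ s →
        (∃ lam : ℝ, 0 < lam ∧ s < t * deriv (laplaceExp ν) lam) →
        (2:ℝ) ^ (-δ) * (s / u) ^ δ ≤ σ t u / σ t s) := by
  have hmass := lm_mass ν R₁ c c' β₁ β₂ hR₁ hc hpoly
  have hanti := lm_psi_strictAnti ν hν hmass
  constructor
  · -- Part 1
    intro a ha
    obtain ⟨M, hM1, hhalf⟩ := lm_halving_all ν hν R₁ c c' β₁ β₂ hR₁ hc hβ₁ hpoly ha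
    set θ : ℝ := 1 + Real.exp 1 / (4 * M) with hθdef
    have hM0 : (0:ℝ) < M := lt_of_lt_of_le one_pos hM1
    have hθ1 : 1 < θ := by
      have : 0 < Real.exp 1 / (4 * M) := by positivity
      rw [hθdef]; linarith
    have hstep := lm_step ν hν hmass a M ha hM1 hhalf
    have hiter := lm_iter ν a θ ha hθ1 hstep
    refine ⟨Real.logb 2 θ, Real.logb_pos one_lt_two hθ1, ?_⟩
    intro t u s ht hu hus hsa
    have hs0 : 0 < s := lt_of_lt_of_le hu hus
    rw [lm_deriv_eq ν hν ha] at hsa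
    have hsta : s / t ≤ psiFun ν a := (div_le_iff₀ ht).mpr (by linarith)
    have huta : u / t ≤ s / t := by gcongr
    have hstrict : psiFun ν a < psiFun ν (a / 2) :=
      hanti (Set.mem_Ioi.mpr (half_pos ha)) (Set.mem_Ioi.mpr ha) (by linarith)
    have hex : ∃ lam : ℝ, 0 < lam ∧ s / t < deriv (laplaceExp ν) lam :=
      ⟨a / 2, half_pos ha, by
        rw [lm_deriv_eq ν hν (half_pos ha)]; exact lt_of_le_of_lt hsta hstrict⟩
    have hexu : ∃ lam : ℝ, 0 < lam ∧ u / t < deriv (laplaceExp ν) lam :=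
      ⟨a / 2, half_pos ha, by
        rw [lm_deriv_eq ν hν (half_pos ha)]
        exact lt_of_le_of_lt (huta.trans hsta) hstrict⟩
    obtain ⟨hσs_pos, hσs_eq⟩ := (hσ t s ht hs0).1 hex
    obtain ⟨hσu_pos, hσu_eq⟩ := (hσ t u ht hu).1 hexu
    rw [lm_deriv_eq ν hν hσs_pos] at hσs_eq
    rw [lm_deriv_eq ν hν hσu_pos] at hσu_eq
    have hσsa : a ≤ σ t s := by
      by_contra hcon
      push_neg at hcon
      have := hanti (Set.mem_Ioi.mpr hσs_pos) (Set.mem_Ioi.mpr ha) hcon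
      rw [hσs_eq] at this
      linarith
    have hcore := lm_core (psiFun ν) hanti θ hθ1 a ha hiter hσsa hσu_pos hσs_eq hσu_eq
      (by positivity) huta
    have hratio : (s / t) / (u / t) = s / u := by
      rw [div_div_div_comm, div_self ht.ne', div_one]
    rwa [hratio] at hcore
  · -- Part 2
    intro hT
    obtain ⟨M, hM1, hhalf⟩ := lm_halving_top ν hν R₁ c c' β₁ β₂ hc hβ₁ hpoly hT
    set θ : ℝ := 1 + Real.exp 1 / (4 * M) with hθdef
    have hM0 : (0:ℝ) < M := lt_of_lt_of_le one_pos hM1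
    have hθ1 : 1 < θ := by
      have : 0 < Real.exp 1 / (4 * M) := by positivity
      rw [hθdef]; linarith
    refine ⟨Real.logb 2 θ, Real.logb_pos one_lt_two hθ1, ?_⟩
    intro t u s ht hu hus hex0
    obtain ⟨lam₀, hlam₀, hslt⟩ := hex0
    have hs0 : 0 < s := lt_of_lt_of_le hu hus
    rw [lm_deriv_eq ν hν hlam₀] at hslt
    have hsta : s / t < psiFun ν lam₀ := (div_lt_iff₀ ht).mpr (by linarith)
    have huta : u / t ≤ s / t := by gcongr
    have hex : ∃ lam : ℝ, 0 < lam ∧ s / t < deriv (laplaceExp ν) lam :=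
      ⟨lam₀, hlam₀, by rw [lm_deriv_eq ν hν hlam₀]; exact hsta⟩
    have hexu : ∃ lam : ℝ, 0 < lam ∧ u / t < deriv (laplaceExp ν) lam :=
      ⟨lam₀, hlam₀, by rw [lm_deriv_eq ν hν hlam₀]; exact lt_of_le_of_lt huta hsta⟩
    obtain ⟨hσs_pos, hσs_eq⟩ := (hσ t s ht hs0).1 hex
    obtain ⟨hσu_pos, hσu_eq⟩ := (hσ t u ht hu).1 hexu
    rw [lm_deriv_eq ν hν hσs_pos] at hσs_eq
    rw [lm_deriv_eq ν hν hσu_pos] at hσu_eq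
    have hstep := lm_step ν hν hmass (σ t s) M hσs_pos hM1
      (fun lam hlam => hhalf lam (hσs_pos.trans_le hlam))
    have hiter := lm_iter ν (σ t s) θ hσs_pos hθ1 hstep
    have hcore := lm_core (psiFun ν) hanti θ hθ1 (σ t s) hσs_pos hiter le_rfl
      hσu_pos hσs_eq hσu_eq (by positivity) huta
    have hratio : (s / t) / (u / t) = s / u := by
      rw [div_div_div_comm, div_self ht.ne', div_one]
    rwa [hratio] at hcore
end
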